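/- Fix an integer s ≥ 2. Let a = (2s−1,2s)(4s−1,4s) and b = (1,3,5,…,4s−1,2,4,6,…,4s) in Sym(4s), and R = ⟨a,b⟩. Then the subgroup N = ⟨a, a^b, a^{b²}, …, a^{b^{s−1}}⟩ is an internal direct product of the s groups ⟨a^{b^i}⟩ (0 ≤ i ≤ s−1), each of order 2, so N ≅ C₂^s; N is normal in R; and R/N is cyclic of order 2s generated by bN. In particular |R| = 2^{s+1}·s. -/

import Mathlib

namespace Stmt5Aux
open Equiv Subgroup

def pt (s : ℕ) (hs : 2 ≤ s) (p : ℕ) : Fin (4 * s) :=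
  ⟨if p % (4 * s) < 2 * s then 2 * (p % (4 * s)) else 2 * (p % (4 * s) - 2 * s) + 1, by
    have h4 : 0 < 4 * s := by omega
    have := Nat.mod_lt p h4
    split <;> omega⟩

theorem pt_congr (s : ℕ) (hs : 2 ≤ s) {p q : ℕ} (h : p % (4 * s) = q % (4 * s)) :
    pt s hs p = pt s hs q := by simp only [pt, h]

theorem mod_small (s : ℕ) {x y : ℕ} (h : y < 4 * s) (hx : x = y ∨ x = y + 4 * s) :
    x % (4 * s) = y := by
  rcases hx with rfl | rfl
  · exact Nat.mod_eq_of_lt h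
  · rw [Nat.add_mod_right]; exact Nat.mod_eq_of_lt h

theorem pow_two_one' {G : Type*} [Group G] {g : G} (h : g * g = 1) (m : ℕ) :
    g ^ m = g ^ (m % 2) := by
  have h2 : g ^ 2 = 1 := by rw [pow_two, h]
  conv_lhs => rw [show m = 2 * (m / 2) + m % 2 by omega]
  rw [pow_add, pow_mul, h2, one_pow, one_mul]

theorem modcongr (s : ℕ) {x y : ℕ} (h : x = y ∨ x = y + 4 * s ∨ y = x + 4 * s) :
    x % (4 * s) = y % (4 * s) := by
  rcases h with rfl | rfl | rfl
  · rfl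
  · rw [Nat.add_mod_right]
  · rw [Nat.add_mod_right]

theorem pt_inj (s : ℕ) (hs : 2 ≤ s) {p q : ℕ} (hp : p < 4 * s) (hq : q < 4 * s)
    (h : pt s hs p = pt s hs q) : p = q := by
  have hp' : p % (4 * s) = p := Nat.mod_eq_of_lt hp
  have hq' : q % (4 * s) = q := Nat.mod_eq_of_lt hq
  simp only [pt, hp', hq', Fin.mk.injEq] at h
  split_ifs at h <;> omega

theorem pt_ne (s : ℕ) (hs : 2 ≤ s) {p q : ℕ} (hp : p < 4 * s) (hq : q < 4 * s)
    (h : p ≠ q) : pt s hs p ≠ pt s hs q := fun hc => h (pt_inj s hs hp hq hc)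

theorem pt_surj (s : ℕ) (hs : 2 ≤ s) (x : Fin (4 * s)) :
    ∃ p, p < 4 * s ∧ pt s hs p = x := by
  have hx := x.isLt
  by_cases hpar : (x : ℕ) % 2 = 0
  · refine ⟨(x : ℕ) / 2, by omega, Fin.ext ?_⟩
    have hlt : (x : ℕ) / 2 % (4 * s) = (x : ℕ) / 2 := Nat.mod_eq_of_lt (by omega)
    simp only [pt, hlt]
    split <;> omega
  · refine ⟨2 * s + (x : ℕ) / 2, by omega, Fin.ext ?_⟩
    have hlt : (2 * s + (x : ℕ) / 2) % (4 * s) = 2 * s + (x : ℕ) / 2 :=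
      Nat.mod_eq_of_lt (by omega)
    simp only [pt, hlt]
    split <;> omega

theorem swap_commute {α : Type*} [DecidableEq α] {x y z w : α}
    (hxz : x ≠ z) (hxw : x ≠ w) (hyz : y ≠ z) (hyw : y ≠ w) :
    Commute (Equiv.swap x y) (Equiv.swap z w) := by
  apply Equiv.Perm.Disjoint.commute
  intro t
  by_cases hx : t = x
  · right; subst hx; exact Equiv.swap_apply_of_ne_of_ne hxz hxw
  by_cases hy : t = y
  · right; subst hy; exact Equiv.swap_apply_of_ne_of_ne hyz hyw
  · left; exact Equiv.swap_apply_of_ne_of_ne hx hy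

section dswap
variable {α : Type*} [DecidableEq α]

theorem dswap_fix {u1 u2 v1 v2 q : α}
    (h1 : q ≠ u1) (h2 : q ≠ u2) (h3 : q ≠ v1) (h4 : q ≠ v2) :
    (Equiv.swap u1 u2 * Equiv.swap v1 v2) q = q := by
  rw [Equiv.Perm.mul_apply, Equiv.swap_apply_of_ne_of_ne h3 h4,
    Equiv.swap_apply_of_ne_of_ne h1 h2]

theorem dswap_u1 {u1 u2 v1 v2 : α} (h3 : u1 ≠ v1) (h4 : u1 ≠ v2) :
    (Equiv.swap u1 u2 * Equiv.swap v1 v2) u1 = u2 := by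
  rw [Equiv.Perm.mul_apply, Equiv.swap_apply_of_ne_of_ne h3 h4, Equiv.swap_apply_left]

theorem dswap_u2 {u1 u2 v1 v2 : α} (h3 : u2 ≠ v1) (h4 : u2 ≠ v2) :
    (Equiv.swap u1 u2 * Equiv.swap v1 v2) u2 = u1 := by
  rw [Equiv.Perm.mul_apply, Equiv.swap_apply_of_ne_of_ne h3 h4, Equiv.swap_apply_right]

theorem dswap_v1 {u1 u2 v1 v2 : α} (h3 : v2 ≠ u1) (h4 : v2 ≠ u2) :
    (Equiv.swap u1 u2 * Equiv.swap v1 v2) v1 = v2 := by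
  rw [Equiv.Perm.mul_apply, Equiv.swap_apply_left, Equiv.swap_apply_of_ne_of_ne h3 h4]

theorem dswap_v2 {u1 u2 v1 v2 : α} (h3 : v1 ≠ u1) (h4 : v1 ≠ u2) :
    (Equiv.swap u1 u2 * Equiv.swap v1 v2) v2 = v1 := by
  rw [Equiv.Perm.mul_apply, Equiv.swap_apply_right, Equiv.swap_apply_of_ne_of_ne h3 h4]

theorem conj_dswap (f : Equiv.Perm α) (u1 u2 v1 v2 : α) :
    f * (Equiv.swap u1 u2 * Equiv.swap v1 v2) * f⁻¹ =
      Equiv.swap (f u1) (f u2) * Equiv.swap (f v1) (f v2) := by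
  rw [Equiv.swap_apply_apply, Equiv.swap_apply_apply]
  group

end dswap

/-- the `i`-th conjugate generator -/
def A (s : ℕ) (a b : Equiv.Perm (Fin (4 * s))) (i : ℕ) : Equiv.Perm (Fin (4 * s)) :=
  b ^ i * a * (b ^ i)⁻¹

/-- support positions (for `i < s`) of `A i` in cycle coordinates -/
def Supp (s i q : ℕ) : Prop :=
  q = s - 1 + i ∨ q = 3 * s - 1 + i ∨ q = 2 * s - 1 + i ∨
    (i = 0 ∧ q = 4 * s - 1) ∨ (1 ≤ i ∧ q = i - 1)


section main
variable (s : ℕ) (hs : 2 ≤ s) (a b : Equiv.Perm (Fin (4 * s)))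
  (ha : a = Equiv.swap ⟨2 * s - 2, (by omega : 2 * s - 2 < 4 * s + 0)⟩
      ⟨2 * s - 1, (by omega : 2 * s - 1 < 4 * s + 0)⟩ *
      Equiv.swap ⟨4 * s - 2, (by omega : 4 * s - 2 < 4 * s + 0)⟩
        ⟨4 * s - 1, (by omega : 4 * s - 1 < 4 * s + 0)⟩)
  (hb : ∀ i : Fin (4 * s), (b i : ℕ) =
      if (i : ℕ) % 2 = 0 then (if (i : ℕ) = 4 * s - 2 then 1 else (i : ℕ) + 2)
      else (if (i : ℕ) = 4 * s - 1 then 0 else (i : ℕ) + 2))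
set_option linter.unusedSectionVars false
include hs ha hb

theorem hb_step (p : ℕ) : b (pt s hs p) = pt s hs (p + 1) := by
  apply Fin.ext
  rw [hb]
  have h4 : 0 < 4 * s := by omega
  have hq : p % (4 * s) < 4 * s := Nat.mod_lt p h4
  have hq1 : (p + 1) % (4 * s) = (p % (4 * s) + 1) % (4 * s) := by
    conv_lhs => rw [← Nat.mod_add_mod]
  by_cases hlast : p % (4 * s) = 4 * s - 1
  · have hr : (p + 1) % (4 * s) = 0 := by
      rw [hq1, hlast]; simp [Nat.sub_add_cancel (by omega : 1 ≤ 4 * s)]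
    simp only [pt, hr]
    split_ifs <;> omega
  · have hr : (p + 1) % (4 * s) = p % (4 * s) + 1 := by
      rw [hq1]; exact Nat.mod_eq_of_lt (by omega)
    simp only [pt, hr]
    split_ifs <;> omega

theorem hb_pow (k p : ℕ) : (b ^ k) (pt s hs p) = pt s hs (p + k) := by
  induction k generalizing p with
  | zero => simp
  | succ k ih =>
    rw [pow_succ, Equiv.Perm.mul_apply, hb_step s hs a b ha hb, ih]
    congr 1
    omega

theorem ha' : a = Equiv.swap (pt s hs (s - 1)) (pt s hs (3 * s - 1)) *
    Equiv.swap (pt s hs (2 * s - 1)) (pt s hs (4 * s - 1)) := by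
  rw [ha]
  congr 1 <;> congr 1 <;> (apply Fin.ext; simp only [pt]) <;>
    rw [Nat.mod_eq_of_lt (by omega)] <;> split <;> omega

/-- canonical double-swap form of `A i`, for `i ≤ s`. -/
theorem hA_eq (i : ℕ) (his : i ≤ s) :
    A s a b i = Equiv.swap (pt s hs (s - 1 + i)) (pt s hs (3 * s - 1 + i)) *
      Equiv.swap (pt s hs (2 * s - 1 + i)) (pt s hs (if i = 0 then 4 * s - 1 else i - 1)) := by
  rw [A, ha' s hs a b ha hb, conj_dswap, hb_pow s hs a b ha hb, hb_pow s hs a b ha hb,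
    hb_pow s hs a b ha hb, hb_pow s hs a b ha hb]
  congr 2
  apply pt_congr
  rcases Nat.eq_zero_or_pos i with rfl | hi
  · simp
  · simp only [if_neg (by omega : ¬ i = 0)]
    rw [show (4 * s - 1 + i) % (4 * s) = i - 1 from mod_small s (by omega) (Or.inr (by omega)),
      show (i - 1) % (4 * s) = i - 1 from mod_small s (by omega) (Or.inl rfl)]

theorem hA_move (i q : ℕ) (his : i < s) (hq : q < 4 * s) (h : Supp s i q) :
    A s a b i (pt s hs q) = pt s hs (q + 2 * s) := by
  rw [hA_eq s hs a b ha hb i (le_of_lt his)]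
  set P4 := if i = 0 then 4 * s - 1 else i - 1 with hP4
  have hP4cases : (P4 = 4 * s - 1 ∧ i = 0) ∨ (P4 = i - 1 ∧ 1 ≤ i) := by
    by_cases h0 : i = 0 <;> simp [hP4, h0] <;> omega
  rcases h with rfl | rfl | rfl | ⟨hi0, rfl⟩ | ⟨hi1, rfl⟩
  · exact (dswap_u1 (pt_ne s hs (by omega) (by omega) (by omega))
      (pt_ne s hs (by omega) (by omega) (by omega))).trans
      (pt_congr s hs (modcongr s (by omega)))
  · exact (dswap_u2 (pt_ne s hs (by omega) (by omega) (by omega))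
      (pt_ne s hs (by omega) (by omega) (by omega))).trans
      (pt_congr s hs (modcongr s (by omega)))
  · exact (dswap_v1 (pt_ne s hs (by omega) (by omega) (by omega))
      (pt_ne s hs (by omega) (by omega) (by omega))).trans
      (pt_congr s hs (modcongr s (by omega)))
  · rw [show pt s hs (4 * s - 1) = pt s hs P4 from pt_congr s hs (modcongr s (by omega))]
    exact (dswap_v2 (pt_ne s hs (by omega) (by omega) (by omega))
      (pt_ne s hs (by omega) (by omega) (by omega))).trans
      (pt_congr s hs (modcongr s (by omega)))
  · rw [show pt s hs (i - 1) = pt s hs P4 from pt_congr s hs (modcongr s (by omega))]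
    exact (dswap_v2 (pt_ne s hs (by omega) (by omega) (by omega))
      (pt_ne s hs (by omega) (by omega) (by omega))).trans
      (pt_congr s hs (modcongr s (by omega)))

theorem hA_fix (i q : ℕ) (his : i < s) (hq : q < 4 * s) (h : ¬ Supp s i q) :
    A s a b i (pt s hs q) = pt s hs q := by
  rw [hA_eq s hs a b ha hb i (le_of_lt his)]
  set P4 := if i = 0 then 4 * s - 1 else i - 1 with hP4
  have hP4cases : (P4 = 4 * s - 1 ∧ i = 0) ∨ (P4 = i - 1 ∧ 1 ≤ i) := by
    by_cases h0 : i = 0 <;> simp [hP4, h0] <;> omega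
  rw [Supp] at h
  exact dswap_fix (pt_ne s hs (by omega) (by omega) (by omega))
    (pt_ne s hs (by omega) (by omega) (by omega))
    (pt_ne s hs (by omega) (by omega) (by omega))
    (pt_ne s hs (by omega) (by omega) (by omega))

theorem ha2 : a * a = 1 := by
  have hc : Commute (Equiv.swap (pt s hs (s - 1)) (pt s hs (3 * s - 1)))
      (Equiv.swap (pt s hs (2 * s - 1)) (pt s hs (4 * s - 1))) :=
    swap_commute (pt_ne s hs (by omega) (by omega) (by omega))
      (pt_ne s hs (by omega) (by omega) (by omega))
      (pt_ne s hs (by omega) (by omega) (by omega))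
      (pt_ne s hs (by omega) (by omega) (by omega))
  rw [ha' s hs a b ha hb, hc.symm.mul_mul_mul_comm, Equiv.swap_mul_self,
    Equiv.swap_mul_self, one_mul]

theorem A_sq (i : ℕ) : A s a b i * A s a b i = 1 := by
  rw [A, ← MulAut.conj_apply, ← map_mul, ha2 s hs a b ha hb, map_one]

theorem A_ne_one (i : ℕ) (his : i < s) : A s a b i ≠ 1 := by
  intro h
  have h1 := hA_move s hs a b ha hb i (s - 1 + i) his (by omega) (Or.inl rfl)
  rw [h] at h1
  simp only [Equiv.Perm.one_apply] at h1
  exact pt_ne s hs (by omega) (by omega) (by omega) h1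

theorem hAs : A s a b s = a := by
  rw [hA_eq s hs a b ha hb s le_rfl, if_neg (by omega),
    show s - 1 + s = 2 * s - 1 by omega, show 3 * s - 1 + s = 4 * s - 1 by omega,
    show 2 * s - 1 + s = 3 * s - 1 by omega, ha' s hs a b ha hb,
    Equiv.swap_comm (pt s hs (3 * s - 1)) (pt s hs (s - 1))]
  exact ((swap_commute (pt_ne s hs (by omega) (by omega) (by omega))
      (pt_ne s hs (by omega) (by omega) (by omega))
      (pt_ne s hs (by omega) (by omega) (by omega))
      (pt_ne s hs (by omega) (by omega) (by omega))).eq).symm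

theorem A_commute (i j : ℕ) (hi : i < s) (hj : j < s) (hij : i ≠ j) :
    Commute (A s a b i) (A s a b j) := by
  apply Equiv.Perm.Disjoint.commute
  intro x
  obtain ⟨q, hq, rfl⟩ := pt_surj s hs x
  by_cases hQ : Supp s i q
  · right
    apply hA_fix s hs a b ha hb j q hj hq
    rw [Supp] at hQ ⊢
    omega
  · left
    exact hA_fix s hs a b ha hb i q hi hq hQ

/-- partial products `A 0 * A 1 * ⋯ * A (k-1)` -/
def gprod (s : ℕ) (a b : Equiv.Perm (Fin (4 * s))) : ℕ → Equiv.Perm (Fin (4 * s))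
  | 0 => 1
  | k + 1 => gprod s a b k * A s a b k

/-- positions moved by `gprod k` -/
def InS (s k q : ℕ) : Prop :=
  (s - 1 ≤ q ∧ q < s - 1 + k) ∨ (3 * s - 1 ≤ q ∧ q < 3 * s - 1 + k) ∨
    (2 * s - 1 ≤ q ∧ q < 2 * s - 1 + k) ∨ (1 ≤ k ∧ q = 4 * s - 1) ∨ (2 ≤ k ∧ q + 2 ≤ k)

theorem gprod_apply : ∀ k, k ≤ s → ∀ q, q < 4 * s →
    (InS s k q → gprod s a b k (pt s hs q) = pt s hs (q + 2 * s)) ∧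
    (¬ InS s k q → gprod s a b k (pt s hs q) = pt s hs q) := by
  intro k
  induction k with
  | zero =>
    intro _ q hq
    constructor
    · intro h; exfalso; rw [InS] at h; omega
    · intro _; rfl
  | succ k ih =>
    intro hk q hq
    have hks : k < s := by omega
    have happ : gprod s a b (k + 1) (pt s hs q) = gprod s a b k (A s a b k (pt s hs q)) := rfl
    by_cases hQ : Supp s k q
    · have hmv := hA_move s hs a b ha hb k q hks hq hQ
      obtain ⟨q2, hrel, hq2lt⟩ : ∃ q2, (q2 = q + 2 * s ∨ q2 + 4 * s = q + 2 * s) ∧ q2 < 4 * s := by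
        rcases Nat.lt_or_ge q (2 * s) with h | h
        · exact ⟨q + 2 * s, Or.inl rfl, by omega⟩
        · exact ⟨q - 2 * s, Or.inr (by omega), by omega⟩
      have heq2 : pt s hs (q + 2 * s) = pt s hs q2 :=
        pt_congr s hs (modcongr s (by omega))
      have hnot : ¬ InS s k q2 := by rw [Supp] at hQ; rw [InS]; omega
      have hfix := (ih (by omega) q2 hq2lt).2 hnot
      have hres : gprod s a b (k + 1) (pt s hs q) = pt s hs (q + 2 * s) := by
        rw [happ, hmv, heq2, hfix]
      constructor
      · intro _; exact hres
      · intro hcon; exfalso; rw [Supp] at hQ; rw [InS] at hcon; omega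
    · have hfx := hA_fix s hs a b ha hb k q hks hq hQ
      have hiff : (InS s (k + 1) q ↔ InS s k q) := by
        rw [Supp] at hQ; rw [InS, InS]; omega
      constructor
      · intro h
        rw [happ, hfx]
        exact (ih (by omega) q hq).1 (hiff.mp h)
      · intro h
        rw [happ, hfx]
        exact (ih (by omega) q hq).2 (fun hc => h (hiff.mpr hc))

theorem b_two_s : b ^ (2 * s) = gprod s a b s := by
  apply Equiv.ext
  intro x
  obtain ⟨q, hq, rfl⟩ := pt_surj s hs x
  rw [hb_pow s hs a b ha hb]
  exact ((gprod_apply s hs a b ha hb s le_rfl q hq).1 (by rw [InS]; omega)).symm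

def SetS (s : ℕ) (a b : Equiv.Perm (Fin (4 * s))) : Set (Equiv.Perm (Fin (4 * s))) :=
  {x | ∃ i : Fin s, x = b ^ (i : ℕ) * a * (b ^ (i : ℕ))⁻¹}

theorem A_mem_N (i : ℕ) (hi : i < s) : A s a b i ∈ Subgroup.closure (SetS s a b) :=
  Subgroup.subset_closure ⟨⟨i, hi⟩, rfl⟩

theorem A_zero : A s a b 0 = a := by simp [A]

theorem gprod_mem : ∀ k, k ≤ s → gprod s a b k ∈ Subgroup.closure (SetS s a b) := by
  intro k
  induction k with
  | zero => intro _; exact one_mem _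
  | succ k ih =>
    intro hk
    exact mul_mem (ih (by omega)) (A_mem_N s hs a b ha hb k (by omega))

theorem b_pow_4s : b ^ (4 * s) = 1 := by
  apply Equiv.ext
  intro x
  obtain ⟨q, hq, rfl⟩ := pt_surj s hs x
  rw [hb_pow s hs a b ha hb]
  exact pt_congr s hs (modcongr s (by omega))

theorem binv_eq : b⁻¹ = b ^ (4 * s - 1) := by
  apply inv_eq_of_mul_eq_one_right
  rw [show b * b ^ (4 * s - 1) = b ^ (4 * s - 1 + 1) from (pow_succ' b _).symm,
    show 4 * s - 1 + 1 = 4 * s by omega]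
  exact b_pow_4s s hs a b ha hb

theorem hbA (i : ℕ) : b * A s a b i * b⁻¹ = A s a b (i + 1) := by
  rw [A, A, pow_succ']
  group

theorem conjbN : ∀ x ∈ Subgroup.closure (SetS s a b),
    b * x * b⁻¹ ∈ Subgroup.closure (SetS s a b) := by
  intro x hx
  refine Subgroup.closure_induction ?_ ?_ ?_ ?_ hx
  · rintro y ⟨i, rfl⟩
    have : (b ^ (i : ℕ) * a * (b ^ (i : ℕ))⁻¹) = A s a b (i : ℕ) := rfl
    rw [this, hbA s hs a b ha hb]
    by_cases hlt : (i : ℕ) + 1 < s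
    · exact A_mem_N s hs a b ha hb _ hlt
    · have : (i : ℕ) + 1 = s := by have := i.isLt; omega
      rw [this, hAs s hs a b ha hb, ← A_zero s hs a b ha hb]
      exact A_mem_N s hs a b ha hb 0 (by omega)
  · simpa using one_mem _
  · intro x y _ _ hx' hy'
    rw [show b * (x * y) * b⁻¹ = (b * x * b⁻¹) * (b * y * b⁻¹) by group]
    exact mul_mem hx' hy'
  · intro x _ hx'
    rw [show b * x⁻¹ * b⁻¹ = (b * x * b⁻¹)⁻¹ by group]
    exact inv_mem hx'

theorem conjb_powN : ∀ k, ∀ x ∈ Subgroup.closure (SetS s a b),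
    b ^ k * x * (b ^ k)⁻¹ ∈ Subgroup.closure (SetS s a b) := by
  intro k
  induction k with
  | zero => intro x hx; simpa using hx
  | succ k ih =>
    intro x hx
    rw [show b ^ (k + 1) * x * (b ^ (k + 1))⁻¹
        = b * (b ^ k * x * (b ^ k)⁻¹) * b⁻¹ by rw [pow_succ']; group]
    exact conjbN s hs a b ha hb _ (ih x hx)

/-- the homomorphism `Multiplicative (ZMod 2) →* Perm` sending the generator to `A i` -/
def phiC (i : Fin s) : Multiplicative (ZMod 2) →* Equiv.Perm (Fin (4 * s)) where
  toFun x := A s a b (i : ℕ) ^ (Multiplicative.toAdd x).val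
  map_one' := by
    simp only [toAdd_one, ZMod.val_zero, pow_zero]
  map_mul' x y := by
    simp only [toAdd_mul, ZMod.val_add, ← pow_two_one' (A_sq s hs a b ha hb (i : ℕ)), pow_add]

theorem phiC_comm : Pairwise fun i j : Fin s => ∀ x y,
    Commute (phiC s hs a b ha hb i x) (phiC s hs a b ha hb j y) := by
  intro i j hij x y
  exact (A_commute s hs a b ha hb i j i.isLt j.isLt
    (fun h => hij (Fin.ext h))).pow_pow _ _

theorem phiC_inj (i : Fin s) : Function.Injective (phiC s hs a b ha hb i) := by
  rw [injective_iff_map_eq_one]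
  intro x hx
  have hv : (Multiplicative.toAdd x).val < 2 := ZMod.val_lt _
  rcases (show (Multiplicative.toAdd x).val = 0 ∨ (Multiplicative.toAdd x).val = 1 by
      omega) with h0 | h1
  · have : Multiplicative.toAdd x = 0 := (ZMod.val_eq_zero _).mp h0
    rw [← ofAdd_toAdd x, this, ofAdd_zero]
  · exfalso
    apply A_ne_one s hs a b ha hb (i : ℕ) i.isLt
    have : phiC s hs a b ha hb i x = A s a b (i : ℕ) ^ 1 := by
      show A s a b (i : ℕ) ^ (Multiplicative.toAdd x).val = _; rw [h1]
    rw [this, pow_one] at hx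
    exact hx

theorem phiC_indep : iSupIndep fun i => (phiC s hs a b ha hb i).range := by
  intro i
  set St := MulAction.stabilizer (Equiv.Perm (Fin (4 * s))) (pt s hs (s - 1 + (i : ℕ))) with hSt
  have hle : (⨆ j, ⨆ (_ : j ≠ i), (phiC s hs a b ha hb j).range) ≤ St := by
    refine iSup_le fun j => iSup_le fun hj => ?_
    rintro _ ⟨x, rfl⟩
    have hAj : A s a b (j : ℕ) ∈ St := by
      rw [hSt, MulAction.mem_stabilizer_iff, Equiv.Perm.smul_def]
      apply hA_fix s hs a b ha hb (j : ℕ) (s - 1 + (i : ℕ)) j.isLt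
        (by have := i.isLt; omega)
      have hi := i.isLt; have hjlt := j.isLt
      have hne : (i : ℕ) ≠ (j : ℕ) := fun h => hj (Fin.ext h.symm)
      rw [Supp]; omega
    exact pow_mem hAj _
  refine Disjoint.mono_right hle ?_
  rw [Subgroup.disjoint_def]
  rintro x ⟨y, rfl⟩ hst
  have hv : (Multiplicative.toAdd y).val < 2 := ZMod.val_lt _
  rcases (show (Multiplicative.toAdd y).val = 0 ∨ (Multiplicative.toAdd y).val = 1 by
      omega) with h0 | h1
  · show A s a b (i : ℕ) ^ (Multiplicative.toAdd y).val = 1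
    rw [h0, pow_zero]
  · exfalso
    have hmem : A s a b (i : ℕ) ∈ St := by
      have : phiC s hs a b ha hb i y = A s a b (i : ℕ) ^ 1 := by
        show A s a b (i : ℕ) ^ (Multiplicative.toAdd y).val = _; rw [h1]
      rw [this, pow_one] at hst
      exact hst
    rw [hSt, MulAction.mem_stabilizer_iff, Equiv.Perm.smul_def,
      hA_move s hs a b ha hb (i : ℕ) _ i.isLt (by have := i.isLt; omega) (Or.inl rfl)] at hmem
    exact pt_ne s hs (by have := i.isLt; omega) (by have := i.isLt; omega)
      (by omega) hmem

theorem phiC_range (i : Fin s) :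
    (phiC s hs a b ha hb i).range = Subgroup.closure {A s a b (i : ℕ)} := by
  apply le_antisymm
  · rintro _ ⟨x, rfl⟩
    exact pow_mem (Subgroup.subset_closure (Set.mem_singleton _)) _
  · rw [Subgroup.closure_le]
    intro x hx
    rw [Set.mem_singleton_iff] at hx
    exact ⟨Multiplicative.ofAdd 1, by
      show A s a b (i : ℕ) ^ (Multiplicative.toAdd (Multiplicative.ofAdd (1 : ZMod 2))).val = x
      rw [toAdd_ofAdd, show ((1 : ZMod 2)).val = 1 from rfl, pow_one, hx]⟩

theorem iUnion_A : (⋃ i : Fin s, {A s a b (i : ℕ)}) = SetS s a b := by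
  ext x
  simp only [Set.mem_iUnion, Set.mem_singleton_iff, SetS, Set.mem_setOf_eq, A]

theorem F_range : (MonoidHom.noncommPiCoprod (phiC s hs a b ha hb)
    (phiC_comm s hs a b ha hb)).range = Subgroup.closure (SetS s a b) := by
  rw [MonoidHom.noncommPiCoprod_range, ← iUnion_A s hs a b ha hb, Subgroup.closure_iUnion]
  exact iSup_congr fun i => phiC_range s hs a b ha hb i

theorem F_inj : Function.Injective (MonoidHom.noncommPiCoprod (phiC s hs a b ha hb)
    (phiC_comm s hs a b ha hb)) :=
  MonoidHom.injective_noncommPiCoprod_of_iSupIndep (ϕ := phiC s hs a b ha hb)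
    (hcomm := phiC_comm s hs a b ha hb) (phiC_indep s hs a b ha hb)
    (phiC_inj s hs a b ha hb)

/-- the multiplicative equivalence `C₂^s ≃* N` -/
noncomputable def eN : Multiplicative (Fin s → ZMod 2) ≃* Subgroup.closure (SetS s a b) :=
  ((MulEquiv.piMultiplicative (fun _ : Fin s => ZMod 2)).trans
    (MonoidHom.ofInjective (F_inj s hs a b ha hb))).trans
    (MulEquiv.subgroupCongr (F_range s hs a b ha hb))

theorem orderOf_a : orderOf a = 2 := by
  refine orderOf_eq_prime ?_ ?_
  · rw [pow_two]; exact ha2 s hs a b ha hb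
  · rw [← A_zero s hs a b ha hb]
    exact A_ne_one s hs a b ha hb 0 (by omega)

theorem orderOf_conjA (i : ℕ) : orderOf (b ^ i * a * (b ^ i)⁻¹) = 2 := by
  have hsc : SemiconjBy (b ^ i) a (b ^ i * a * (b ^ i)⁻¹) := by
    show b ^ i * a = b ^ i * a * (b ^ i)⁻¹ * b ^ i
    group
  rw [← SemiconjBy.orderOf_eq _ hsc]
  exact orderOf_a s hs a b ha hb

theorem N_le_R : Subgroup.closure (SetS s a b) ≤ Subgroup.closure {a, b} := by
  rw [Subgroup.closure_le]
  rintro x ⟨i, rfl⟩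
  have haR : a ∈ Subgroup.closure ({a, b} : Set (Equiv.Perm (Fin (4 * s)))) :=
    Subgroup.subset_closure (by simp)
  have hbR : b ∈ Subgroup.closure ({a, b} : Set (Equiv.Perm (Fin (4 * s)))) :=
    Subgroup.subset_closure (by simp)
  exact mul_mem (mul_mem (pow_mem hbR _) haR) (inv_mem (pow_mem hbR _))

theorem decomp : ∀ x ∈ Subgroup.closure ({a, b} : Set (Equiv.Perm (Fin (4 * s)))),
    ∃ n ∈ Subgroup.closure (SetS s a b), ∃ k : ℕ, x = n * b ^ k := by
  intro x hx
  refine Subgroup.closure_induction ?_ ?_ ?_ ?_ hx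
  · rintro y hy
    rcases hy with h | h
    · refine ⟨y, ?_, 0, by simp⟩
      rw [h, ← A_zero s hs a b ha hb]
      exact A_mem_N s hs a b ha hb 0 (by omega)
    · exact ⟨1, one_mem _, 1, by rw [h]; simp⟩
  · exact ⟨1, one_mem _, 0, by simp⟩
  · rintro x y _ _ ⟨n, hn, k, rfl⟩ ⟨m, hm, l, rfl⟩
    refine ⟨n * (b ^ k * m * (b ^ k)⁻¹),
      mul_mem hn (conjb_powN s hs a b ha hb k m hm), k + l, ?_⟩
    rw [pow_add]
    group
  · rintro x _ ⟨n, hn, k, rfl⟩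
    have hbm : b ^ ((4 * s - 1) * k) = (b ^ k)⁻¹ := by
      rw [← inv_pow, binv_eq s hs a b ha hb, ← pow_mul]
    refine ⟨b ^ ((4 * s - 1) * k) * n⁻¹ * (b ^ ((4 * s - 1) * k))⁻¹,
      conjb_powN s hs a b ha hb _ _ (inv_mem hn), (4 * s - 1) * k, ?_⟩
    rw [mul_inv_rev, ← hbm]
    group

/-- position mod `2s` (the block of a point) -/
def posZ (x : Fin (4 * s)) : ZMod (2 * s) :=
  ((if (x : ℕ) % 2 = 0 then (x : ℕ) / 2 else 2 * s + (x : ℕ) / 2 : ℕ) : ZMod (2 * s))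

theorem cast_mod4s (q : ℕ) : ((q % (4 * s) : ℕ) : ZMod (2 * s)) = (q : ZMod (2 * s)) := by
  refine (ZMod.natCast_eq_natCast_iff _ _ _).mpr ?_
  conv_rhs => rw [← Nat.div_add_mod q (4 * s)]
  calc q % (4 * s) = 0 + q % (4 * s) := (zero_add _).symm
    _ ≡ 4 * s * (q / (4 * s)) + q % (4 * s) [MOD 2 * s] :=
      Nat.ModEq.add_right _ ((Nat.modEq_zero_iff_dvd).mpr ⟨2 * (q / (4 * s)), by ring⟩).symm

theorem posZ_pt (q : ℕ) : posZ s (pt s hs q) = (q : ZMod (2 * s)) := by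
  have h4 : 0 < 4 * s := by omega
  have hlt := Nat.mod_lt q h4
  have h1 : (if ((pt s hs q : ℕ)) % 2 = 0 then (pt s hs q : ℕ) / 2
      else 2 * s + (pt s hs q : ℕ) / 2) = q % (4 * s) := by
    simp only [pt]
    split_ifs <;> omega
  rw [posZ, h1, cast_mod4s s hs a b ha hb]

theorem cast_add2s (q : ℕ) : ((q + 2 * s : ℕ) : ZMod (2 * s)) = (q : ZMod (2 * s)) := by
  rw [Nat.cast_add, ZMod.natCast_self, add_zero]

/-- subgroup of permutations shifting all blocks uniformly -/
def Sh : Subgroup (Equiv.Perm (Fin (4 * s))) where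
  carrier := {x | ∃ k : ZMod (2 * s), ∀ v, posZ s (x v) = posZ s v + k}
  one_mem' := ⟨0, by simp⟩
  mul_mem' := by
    rintro x y ⟨k, hk⟩ ⟨l, hl⟩
    exact ⟨l + k, fun v => by rw [Equiv.Perm.mul_apply, hk, hl]; ring⟩
  inv_mem' := by
    rintro x ⟨k, hk⟩
    refine ⟨-k, fun v => ?_⟩
    have h1 := hk (x⁻¹ v)
    rw [← Equiv.Perm.mul_apply, mul_inv_cancel, Equiv.Perm.one_apply] at h1
    rw [eq_comm, h1]; ring

theorem a_mem_Sh : a ∈ Sh s := by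
  refine ⟨0, fun v => ?_⟩
  obtain ⟨q, hq, rfl⟩ := pt_surj s hs v
  rw [← A_zero s hs a b ha hb, add_zero]
  by_cases hQ : Supp s 0 q
  · rw [hA_move s hs a b ha hb 0 q (by omega) hq hQ, posZ_pt s hs a b ha hb,
      posZ_pt s hs a b ha hb, cast_add2s s hs a b ha hb]
  · rw [hA_fix s hs a b ha hb 0 q (by omega) hq hQ]

theorem b_mem_Sh : b ∈ Sh s := by
  refine ⟨1, fun v => ?_⟩
  obtain ⟨q, hq, rfl⟩ := pt_surj s hs v
  rw [hb_step s hs a b ha hb, posZ_pt s hs a b ha hb, posZ_pt s hs a b ha hb,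
    Nat.cast_add, Nat.cast_one]

theorem R_le_Sh : Subgroup.closure ({a, b} : Set (Equiv.Perm (Fin (4 * s)))) ≤ Sh s := by
  rw [Subgroup.closure_le]
  rintro x hx
  rcases hx with h | h
  · rw [h]; exact a_mem_Sh s hs a b ha hb
  · rw [h]; exact b_mem_Sh s hs a b ha hb

/-- subgroup of permutations preserving every block -/
def NZ : Subgroup (Equiv.Perm (Fin (4 * s))) where
  carrier := {x | ∀ v, posZ s (x v) = posZ s v}
  one_mem' := by simp
  mul_mem' := by
    rintro x y hx hy v
    rw [Equiv.Perm.mul_apply, hx, hy]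
  inv_mem' := by
    rintro x hx v
    have h1 := hx (x⁻¹ v)
    rw [← Equiv.Perm.mul_apply, mul_inv_cancel, Equiv.Perm.one_apply] at h1
    rw [h1]

theorem N_le_NZ : Subgroup.closure (SetS s a b) ≤ NZ s := by
  rw [Subgroup.closure_le]
  rintro x ⟨i, rfl⟩ v
  have : (b ^ (i : ℕ) * a * (b ^ (i : ℕ))⁻¹) = A s a b (i : ℕ) := rfl
  rw [this]
  obtain ⟨q, hq, rfl⟩ := pt_surj s hs v
  by_cases hQ : Supp s (i : ℕ) q
  · rw [hA_move s hs a b ha hb (i : ℕ) q i.isLt hq hQ, posZ_pt s hs a b ha hb,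
      posZ_pt s hs a b ha hb, cast_add2s s hs a b ha hb]
  · rw [hA_fix s hs a b ha hb (i : ℕ) q i.isLt hq hQ]

theorem posZ_pt0 : posZ s (pt s hs 0) = 0 := by
  rw [posZ_pt s hs a b ha hb, Nat.cast_zero]

/-- the block-shift homomorphism on `R` -/
def phiR : Subgroup.closure ({a, b} : Set (Equiv.Perm (Fin (4 * s)))) →*
    Multiplicative (ZMod (2 * s)) where
  toFun x := Multiplicative.ofAdd (posZ s ((x : Equiv.Perm (Fin (4 * s))) (pt s hs 0)))
  map_one' := by
    show Multiplicative.ofAdd (posZ s ((1 : Equiv.Perm (Fin (4 * s))) (pt s hs 0))) = 1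
    rw [Equiv.Perm.one_apply, posZ_pt0 s hs a b ha hb, ofAdd_zero]
  map_mul' x y := by
    obtain ⟨k, hk⟩ := R_le_Sh s hs a b ha hb x.2
    have hx0 : posZ s ((x : Equiv.Perm (Fin (4 * s))) (pt s hs 0)) = k := by
      rw [hk, posZ_pt0 s hs a b ha hb, zero_add]
    have hxy : ((x * y : Subgroup.closure ({a, b} : Set (Equiv.Perm (Fin (4 * s))))) :
        Equiv.Perm (Fin (4 * s))) = (x : Equiv.Perm (Fin (4 * s))) *
        (y : Equiv.Perm (Fin (4 * s))) := rfl
    show Multiplicative.ofAdd (posZ s (((x : Equiv.Perm (Fin (4 * s))) *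
        (y : Equiv.Perm (Fin (4 * s)))) (pt s hs 0))) = _
    rw [Equiv.Perm.mul_apply, hk]
    show _ = Multiplicative.ofAdd (posZ s ((x : Equiv.Perm (Fin (4 * s))) (pt s hs 0))) *
      Multiplicative.ofAdd (posZ s ((y : Equiv.Perm (Fin (4 * s))) (pt s hs 0)))
    rw [hx0, ← ofAdd_add]
    congr 1
    ring

theorem b_mem_R : b ∈ Subgroup.closure ({a, b} : Set (Equiv.Perm (Fin (4 * s)))) :=
  Subgroup.subset_closure (by simp)

theorem phiR_pow_b (k : ℕ) :
    phiR s hs a b ha hb ((⟨b, b_mem_R s hs a b ha hb⟩ :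
      Subgroup.closure ({a, b} : Set (Equiv.Perm (Fin (4 * s))))) ^ k) =
    Multiplicative.ofAdd ((k : ZMod (2 * s))) := by
  have hcoe : (((⟨b, b_mem_R s hs a b ha hb⟩ :
      Subgroup.closure ({a, b} : Set (Equiv.Perm (Fin (4 * s))))) ^ k :
      Subgroup.closure ({a, b} : Set (Equiv.Perm (Fin (4 * s))))) :
      Equiv.Perm (Fin (4 * s))) = b ^ k := by
    rw [SubmonoidClass.coe_pow]
  show Multiplicative.ofAdd (posZ s _) = _
  rw [hcoe, hb_pow s hs a b ha hb, posZ_pt s hs a b ha hb]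
  norm_num

theorem phiR_surj : Function.Surjective (phiR s hs a b ha hb) := by
  haveI : NeZero (2 * s) := ⟨by omega⟩
  intro m
  refine ⟨(⟨b, b_mem_R s hs a b ha hb⟩ :
    Subgroup.closure ({a, b} : Set (Equiv.Perm (Fin (4 * s))))) ^
      (Multiplicative.toAdd m).val, ?_⟩
  rw [phiR_pow_b s hs a b ha hb, ZMod.natCast_rightInverse _, ofAdd_toAdd]

theorem phiR_zpowers :
    Subgroup.zpowers (phiR s hs a b ha hb ⟨b, b_mem_R s hs a b ha hb⟩) = ⊤ := by
  haveI : NeZero (2 * s) := ⟨by omega⟩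
  have hb1 : phiR s hs a b ha hb ⟨b, b_mem_R s hs a b ha hb⟩ =
      Multiplicative.ofAdd ((1 : ZMod (2 * s))) := by
    have := phiR_pow_b s hs a b ha hb 1
    rwa [pow_one, Nat.cast_one] at this
  rw [eq_top_iff]
  rintro y -
  rw [Subgroup.mem_zpowers_iff]
  refine ⟨((Multiplicative.toAdd y).val : ℤ), ?_⟩
  rw [zpow_natCast, hb1, ← ofAdd_nsmul, nsmul_eq_mul, mul_one,
    ZMod.natCast_rightInverse _, ofAdd_toAdd]

theorem b2s_mem_N : b ^ (2 * s) ∈ Subgroup.closure (SetS s a b) := by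
  rw [b_two_s s hs a b ha hb]
  exact gprod_mem s hs a b ha hb s le_rfl

theorem phiR_ker : (phiR s hs a b ha hb).ker =
    (Subgroup.closure (SetS s a b)).subgroupOf
      (Subgroup.closure ({a, b} : Set (Equiv.Perm (Fin (4 * s))))) := by
  ext x
  rw [MonoidHom.mem_ker, Subgroup.mem_subgroupOf]
  constructor
  · intro h
    have h0 : posZ s ((x : Equiv.Perm (Fin (4 * s))) (pt s hs 0)) = 0 := by
      have : Multiplicative.ofAdd (posZ s ((x : Equiv.Perm (Fin (4 * s))) (pt s hs 0))) = 1 := h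
      rwa [ofAdd_eq_one] at this
    obtain ⟨n, hn, k, hxeq⟩ := decomp s hs a b ha hb (x : Equiv.Perm (Fin (4 * s))) x.2
    have hval : posZ s ((x : Equiv.Perm (Fin (4 * s))) (pt s hs 0)) = (k : ZMod (2 * s)) := by
      rw [hxeq, Equiv.Perm.mul_apply, hb_pow s hs a b ha hb,
        N_le_NZ s hs a b ha hb hn, posZ_pt s hs a b ha hb]
      norm_num
    rw [hval] at h0
    obtain ⟨t, rfl⟩ := (ZMod.natCast_eq_zero_iff k (2 * s)).mp h0
    rw [hxeq, pow_mul]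
    exact mul_mem hn (pow_mem (b2s_mem_N s hs a b ha hb) t)
  · intro h
    have h0 : posZ s ((x : Equiv.Perm (Fin (4 * s))) (pt s hs 0)) = 0 := by
      rw [N_le_NZ s hs a b ha hb h, posZ_pt0 s hs a b ha hb]
    show Multiplicative.ofAdd (posZ s ((x : Equiv.Perm (Fin (4 * s))) (pt s hs 0))) = 1
    rw [h0, ofAdd_zero]

theorem card_N : Nat.card (Subgroup.closure (SetS s a b)) = 2 ^ s := by
  have e := (eN s hs a b ha hb).symm.toEquiv.trans
    (MulEquiv.piMultiplicative (fun _ : Fin s => ZMod 2)).toEquiv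
  rw [Nat.card_congr e, Nat.card_pi]
  simp [Nat.card_zmod]

theorem card_R : Nat.card (Subgroup.closure ({a, b} : Set (Equiv.Perm (Fin (4 * s))))) =
    2 ^ (s + 1) * s := by
  rw [Subgroup.card_eq_card_quotient_mul_card_subgroup (phiR s hs a b ha hb).ker]
  have h1 : Nat.card (Subgroup.closure ({a, b} : Set (Equiv.Perm (Fin (4 * s)))) ⧸
      (phiR s hs a b ha hb).ker) = 2 * s := by
    rw [Nat.card_congr (QuotientGroup.quotientKerEquivOfSurjective _
      (phiR_surj s hs a b ha hb)).toEquiv, Nat.card_congr Multiplicative.toAdd,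
      Nat.card_zmod]
  have h2 : Nat.card (phiR s hs a b ha hb).ker = 2 ^ s := by
    rw [phiR_ker s hs a b ha hb,
      Nat.card_congr (Subgroup.subgroupOfEquivOfLe (N_le_R s hs a b ha hb)).toEquiv,
      card_N s hs a b ha hb]
  rw [h1, h2, pow_succ]
  ring

end main
end Stmt5Aux



/-- Fix `s ≥ 2`. Let `a = (2s−1,2s)(4s−1,4s)` and
`b = (1,3,5,…,4s−1,2,4,6,…,4s)` in `Sym(4s)`, and `R = ⟨a,b⟩`.
Then `N = ⟨a, a^b, …, a^{b^{s−1}}⟩` is an internal direct product of the `s` subgroups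
`⟨a^{b^i}⟩`, each of order `2`, so `N ≅ C₂^s`; `N` is normal in `R`; and `R/N` is cyclic of
order `2s` generated by `bN`. In particular `|R| = 2^{s+1}·s`.

Here `Sym(4s)` is realized as `Equiv.Perm (Fin (4s))`, with points `0,…,4s−1` corresponding
to `1,…,4s`. Since the paper composes permutations left-to-right (permutations act on the
right) while Mathlib's `Equiv.Perm` composes right-to-left, products of permutations are
reversed: the paper's conjugate `a^{b^i} = b^{-i} a b^{i}` is `b^i * a * (b^i)⁻¹` here. -/
theorem stmt5 (s : ℕ) (hs : 2 ≤ s)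
    (a b : Equiv.Perm (Fin (4 * s)))
    (ha : a = Equiv.swap ⟨2 * s - 2, by omega⟩ ⟨2 * s - 1, by omega⟩ *
      Equiv.swap ⟨4 * s - 2, by omega⟩ ⟨4 * s - 1, by omega⟩)
    (hb : ∀ i : Fin (4 * s), (b i : ℕ) =
      if (i : ℕ) % 2 = 0 then (if (i : ℕ) = 4 * s - 2 then 1 else (i : ℕ) + 2)
      else (if (i : ℕ) = 4 * s - 1 then 0 else (i : ℕ) + 2)) :
    (∀ i : Fin s, orderOf (b ^ (i : ℕ) * a * (b ^ (i : ℕ))⁻¹) = 2) ∧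
    Nonempty
      (↥(Subgroup.closure {x : Equiv.Perm (Fin (4 * s)) |
          ∃ i : Fin s, x = b ^ (i : ℕ) * a * (b ^ (i : ℕ))⁻¹}) ≃*
        Multiplicative (Fin s → ZMod 2)) ∧
    Subgroup.closure {x : Equiv.Perm (Fin (4 * s)) |
        ∃ i : Fin s, x = b ^ (i : ℕ) * a * (b ^ (i : ℕ))⁻¹} ≤
      Subgroup.closure {a, b} ∧
    (∀ r ∈ Subgroup.closure ({a, b} : Set (Equiv.Perm (Fin (4 * s)))),
      ∀ x ∈ Subgroup.closure {x : Equiv.Perm (Fin (4 * s)) |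
          ∃ i : Fin s, x = b ^ (i : ℕ) * a * (b ^ (i : ℕ))⁻¹},
        r * x * r⁻¹ ∈ Subgroup.closure {x : Equiv.Perm (Fin (4 * s)) |
          ∃ i : Fin s, x = b ^ (i : ℕ) * a * (b ^ (i : ℕ))⁻¹}) ∧
    (∃ φ : ↥(Subgroup.closure ({a, b} : Set (Equiv.Perm (Fin (4 * s))))) →*
        Multiplicative (ZMod (2 * s)),
      Function.Surjective φ ∧
      φ.ker = (Subgroup.closure {x : Equiv.Perm (Fin (4 * s)) |
          ∃ i : Fin s, x = b ^ (i : ℕ) * a * (b ^ (i : ℕ))⁻¹}).subgroupOf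
        (Subgroup.closure {a, b}) ∧
      Subgroup.zpowers (φ ⟨b, Subgroup.subset_closure (by simp)⟩) = ⊤) ∧
    Nat.card ↥(Subgroup.closure ({a, b} : Set (Equiv.Perm (Fin (4 * s))))) =
      2 ^ (s + 1) * s := by
  refine ⟨fun i => Stmt5Aux.orderOf_conjA s hs a b ha hb (i : ℕ),
    ⟨(Stmt5Aux.eN s hs a b ha hb).symm⟩,
    Stmt5Aux.N_le_R s hs a b ha hb, ?_,
    ⟨Stmt5Aux.phiR s hs a b ha hb, Stmt5Aux.phiR_surj s hs a b ha hb,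
      Stmt5Aux.phiR_ker s hs a b ha hb, Stmt5Aux.phiR_zpowers s hs a b ha hb⟩,
    Stmt5Aux.card_R s hs a b ha hb⟩
  intro r hr x hx
  obtain ⟨n, hn, k, rfl⟩ := Stmt5Aux.decomp s hs a b ha hb r hr
  have h1 := Stmt5Aux.conjb_powN s hs a b ha hb k x hx
  have heq : n * b ^ k * x * (n * b ^ k)⁻¹ = n * (b ^ k * x * (b ^ k)⁻¹) * n⁻¹ := by group
  rw [heq]
  exact mul_mem (mul_mem hn h1) (inv_mem hn)
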